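/- Let (X,d) be a metric space whose underlying set X is finite and nonempty. Then for every pair of distinct points x, x' ∈ X there exist m ≥ 1 and pairwise distinct points x = p₀, p₁, …, p_m = x' in X such that every consecutive pair {pᵢ, pᵢ₊₁} is a basic edge and ∑_{i=0}^{m−1} d(pᵢ, pᵢ₊₁) = d(x, x'). In particular, the basic geodesic graph of (X,d) is connected and its shortest-path metric (with each basic edge {a,b} given length d(a,b)) realises d. -/

import Mathlib

/-- A chain of intermediate points witnessing that the pair `{x, x'}` is non-basic:
`k ≥ 1` pairwise distinct intermediate points, each different from `x` and `x'`,
along which the distances sum to `dist x x'`. -/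
def IsNonBasicChain {X : Type*} [MetricSpace X] (x x' : X) : Prop :=
  ∃ (k : ℕ) (p : Fin (k + 2) → X), 1 ≤ k ∧ Function.Injective p ∧
    p 0 = x ∧ p (Fin.last (k + 1)) = x' ∧
    dist x x' = ∑ i : Fin (k + 1), dist (p i.castSucc) (p i.succ)

/-- The unordered pair `{x, x'}` is a non-basic edge. -/
def IsNonBasicEdge {X : Type*} [MetricSpace X] (x x' : X) : Prop :=
  IsNonBasicChain x x' ∨ IsNonBasicChain x' x

/-- The unordered pair `{x, x'}` is a basic edge. -/
def IsBasicEdge {X : Type*} [MetricSpace X] (x x' : X) : Prop :=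
  x ≠ x' ∧ ¬ IsNonBasicEdge x x'

/-- The basic geodesic graph: the simple graph on `X` whose edges are the basic edges. -/
def basicGeodesicGraph (X : Type*) [MetricSpace X] : SimpleGraph X where
  Adj x y := IsBasicEdge x y
  symm := ⟨fun x y ⟨h1, h2⟩ => ⟨h1.symm, fun h => h2 h.symm⟩⟩
  loopless := ⟨fun x ⟨h1, _⟩ => h1 rfl⟩

/-- Extract a single midpoint from a non-basic chain. -/
lemma exists_mid {X : Type*} [MetricSpace X] {x x' : X} (h : IsNonBasicChain x x') :
    ∃ y : X, y ≠ x ∧ y ≠ x' ∧ dist x y + dist y x' = dist x x' := by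
  obtain ⟨k, p, hk, hinj, h0, hl, hsum⟩ := h
  set f : ℕ → X := fun n => p ⟨n % (k + 2), Nat.mod_lt _ (by omega)⟩ with hf
  refine ⟨f 1, ?_, ?_, ?_⟩
  · intro hxy
    rw [← h0] at hxy
    have := hinj hxy
    have : (1 : ℕ) % (k + 2) = (0 : Fin (k+2)).val := congrArg Fin.val this
    simp [Nat.mod_eq_of_lt (show 1 < k + 2 by omega)] at this
  · intro hxy
    rw [← hl] at hxy
    have := hinj hxy
    have : (1 : ℕ) % (k + 2) = (Fin.last (k+1)).val := congrArg Fin.val this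
    simp [Nat.mod_eq_of_lt (show 1 < k + 2 by omega), Fin.last] at this
    omega
  · have heq : ∑ i : Fin (k + 1), dist (p i.castSucc) (p i.succ)
        = ∑ i ∈ Finset.range (k + 1), dist (f i) (f (i + 1)) := by
      rw [← Fin.sum_univ_eq_sum_range (fun n => dist (f n) (f (n + 1))) (k + 1)]
      refine Finset.sum_congr rfl fun i _ => ?_
      have h1 : (⟨i.val % (k + 2), Nat.mod_lt _ (by omega)⟩ : Fin (k+2)) = i.castSucc := by
        ext; simp [Nat.mod_eq_of_lt (show i.val < k + 2 by omega)]
      have h2 : (⟨(i.val + 1) % (k + 2), Nat.mod_lt _ (by omega)⟩ : Fin (k+2)) = i.succ := by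
        ext; simp [Nat.mod_eq_of_lt (show i.val + 1 < k + 2 by omega)]
      simp only [hf]
      rw [h1, h2]
    rw [heq] at hsum
    rw [Finset.sum_range_succ' (fun n => dist (f n) (f (n + 1))) k] at hsum
    have htail : dist (f 1) (f (k + 1)) ≤ ∑ i ∈ Finset.range k, dist (f (i + 1)) (f (i + 1 + 1)) := by
      have := dist_le_range_sum_dist (fun n => f (n + 1)) k
      simpa using this
    have hfk : f (k + 1) = x' := by
      rw [← hl]; simp only [hf]; congr 1
      ext; simp [Nat.mod_eq_of_lt (show k + 1 < k + 2 by omega), Fin.last]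
    have hf0 : f 0 = x := by
      rw [← h0]; simp only [hf]; congr 1
    rw [hfk] at htail
    have hxy : dist (f 0) (f 1) = dist x (f 1) := by rw [hf0]
    have htri := dist_triangle x (f 1) x'
    rw [hxy] at hsum
    linarith

/-- An auxiliary predicate: `f 0, …, f m` is an injective geodesic path of basic
edges from `x` to `x'`, each of whose points lies metrically between `x` and `x'`. -/
def GoodPath {X : Type*} [MetricSpace X] (x x' : X) (m : ℕ) (f : ℕ → X) : Prop :=
  1 ≤ m ∧ (∀ i ≤ m, ∀ j ≤ m, f i = f j → i = j) ∧ f 0 = x ∧ f m = x' ∧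
  (∀ i < m, IsBasicEdge (f i) (f (i + 1))) ∧
  (∑ i ∈ Finset.range m, dist (f i) (f (i + 1))) = dist x x' ∧
  (∀ j ≤ m, dist x (f j) + dist (f j) x' = dist x x')

lemma goodPath_concat {X : Type*} [MetricSpace X] {x y x' : X}
    (hxy : dist x y + dist y x' = dist x x')
    {m n : ℕ} {P Q : ℕ → X} (hP : GoodPath x y m P) (hQ : GoodPath y x' n Q) :
    GoodPath x x' (m + n) (fun i => if i ≤ m then P i else Q (i - m)) := by
  obtain ⟨hm1, hPinj, hP0, hPm, hPb, hPs, hPbet⟩ := hP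
  obtain ⟨hn1, hQinj, hQ0, hQn, hQb, hQs, hQbet⟩ := hQ
  set h : ℕ → X := fun i => if i ≤ m then P i else Q (i - m) with hh
  have hA : ∀ i ≤ m, h i = P i := fun i hi => if_pos hi
  have hB : ∀ i, m ≤ i → h i = Q (i - m) := by
    intro i hi
    rcases Nat.eq_or_lt_of_le hi with rfl | hlt
    · simp only [hh, if_pos le_rfl, Nat.sub_self, hQ0, hPm]
    · exact if_neg (by omega)
  have key1 : ∀ z : X, dist x z + dist z y = dist x y → dist x z + dist z x' = dist x x' := by
    intro z hz
    have t1 := dist_triangle x z x'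
    have t2 := dist_triangle z y x'
    linarith
  have key2 : ∀ z : X, dist y z + dist z x' = dist y x' → dist x z + dist z x' = dist x x' := by
    intro z hz
    have t1 := dist_triangle x z x'
    have t2 := dist_triangle x y z
    linarith
  refine ⟨by omega, ?_, ?_, ?_, ?_, ?_, ?_⟩
  · -- injectivity
    intro i hi j hj hij
    by_cases hi' : i ≤ m <;> by_cases hj' : j ≤ m
    · rw [hA i hi', hA j hj'] at hij; exact hPinj i hi' j hj' hij
    · exfalso
      rw [hA i hi', hB j (by omega)] at hij
      have hbi := hPbet i hi'
      have hbj := hQbet (j - m) (by omega)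
      rw [← hij] at hbj
      have t1 := dist_triangle x (P i) x'
      have hzy : dist (P i) y = 0 := by
        have := dist_comm y (P i)
        have h0 : (0:ℝ) ≤ dist (P i) y := dist_nonneg
        linarith
      have hiy : P i = y := dist_eq_zero.mp hzy
      have : j - m = 0 := hQinj (j - m) (by omega) 0 (by omega) (by rw [← hij, hiy, hQ0])
      omega
    · exfalso
      rw [hB i (by omega), hA j hj'] at hij
      have hbj := hPbet j hj'
      have hbi := hQbet (i - m) (by omega)
      rw [hij] at hbi
      have t1 := dist_triangle x (P j) x'
      have hzy : dist (P j) y = 0 := by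
        have := dist_comm y (P j)
        have h0 : (0:ℝ) ≤ dist (P j) y := dist_nonneg
        linarith
      have hiy : P j = y := dist_eq_zero.mp hzy
      have : i - m = 0 := hQinj (i - m) (by omega) 0 (by omega) (by rw [hij, hiy, hQ0])
      omega
    · rw [hB i (by omega), hB j (by omega)] at hij
      have := hQinj (i - m) (by omega) (j - m) (by omega) hij
      omega
  · rw [hA 0 (by omega), hP0]
  · rw [hB (m + n) (by omega)]; simpa using hQn
  · -- basic edges
    intro i hi
    by_cases hi' : i < m
    · rw [hA i (by omega), hA (i + 1) (by omega)]; exact hPb i hi'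
    · rw [hB i (by omega), hB (i + 1) (by omega)]
      have : i + 1 - m = (i - m) + 1 := by omega
      rw [this]
      exact hQb (i - m) (by omega)
  · -- sum
    have hsplit : ∑ i ∈ Finset.range (m + n), dist (h i) (h (i + 1))
        = (∑ i ∈ Finset.Ico 0 m, dist (h i) (h (i + 1)))
          + ∑ i ∈ Finset.Ico m (m + n), dist (h i) (h (i + 1)) := by
      rw [Finset.sum_Ico_consecutive _ (by omega) (by omega), Finset.range_eq_Ico]
    rw [hsplit]
    have e1 : ∑ i ∈ Finset.Ico 0 m, dist (h i) (h (i + 1))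
        = ∑ i ∈ Finset.range m, dist (P i) (P (i + 1)) := by
      rw [← Finset.range_eq_Ico]
      refine Finset.sum_congr rfl fun i hi => ?_
      rw [Finset.mem_range] at hi
      rw [hA i (by omega), hA (i + 1) (by omega)]
    have e2 : ∑ i ∈ Finset.Ico m (m + n), dist (h i) (h (i + 1))
        = ∑ i ∈ Finset.range n, dist (Q i) (Q (i + 1)) := by
      rw [Finset.sum_Ico_eq_sum_range]
      have : m + n - m = n := by omega
      rw [this]
      refine Finset.sum_congr rfl fun i hi => ?_
      rw [hB (m + i) (by omega), hB (m + i + 1) (by omega)]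
      congr 1 <;> congr 1 <;> omega
    rw [e1, e2, hPs, hQs, hxy]
  · -- betweenness
    intro j hj
    by_cases hj' : j ≤ m
    · rw [hA j hj']; exact key1 _ (hPbet j hj')
    · rw [hB j (by omega)]; exact key2 _ (hQbet (j - m) (by omega))
-- continuation pieces (tested appended to aux2)
lemma goodPath_single {X : Type*} [MetricSpace X] {x x' : X} (hb : IsBasicEdge x x') :
    GoodPath x x' 1 (fun i => if i = 0 then x else x') := by
  refine ⟨le_rfl, ?_, by simp, by simp, ?_, by simp, ?_⟩
  · intro i hi j hj hij
    have hne := hb.1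
    interval_cases i <;> interval_cases j <;> simp_all
  · intro i hi
    interval_cases i
    simpa using hb
  · intro j hj
    interval_cases j <;> simp

open Classical in
lemma goodPath_exists {X : Type*} [MetricSpace X] [Fintype X] :
    ∀ (n : ℕ) (x x' : X), x ≠ x' →
      (Finset.univ.filter
        (fun y => y ≠ x ∧ y ≠ x' ∧ dist x y + dist y x' = dist x x')).card ≤ n →
      ∃ m f, GoodPath x x' m f := by
  intro n
  induction n with
  | zero =>
    intro x x' hne hcard
    by_cases hb : IsBasicEdge x x'
    · exact ⟨1, _, goodPath_single hb⟩
    · exfalso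
      have hnb : IsNonBasicEdge x x' := by
        by_contra hc; exact hb ⟨hne, hc⟩
      obtain ⟨y, hy1, hy2, hy3⟩ : ∃ y : X, y ≠ x ∧ y ≠ x' ∧ dist x y + dist y x' = dist x x' := by
        rcases hnb with h | h
        · exact exists_mid h
        · obtain ⟨y, hy1, hy2, hy3⟩ := exists_mid h
          exact ⟨y, hy2, hy1, by rw [dist_comm x' y, dist_comm y x, dist_comm x' x] at hy3; linarith⟩
      have : y ∈ Finset.univ.filter
          (fun y => y ≠ x ∧ y ≠ x' ∧ dist x y + dist y x' = dist x x') := by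
        simp [hy1, hy2, hy3]
      have := Finset.card_pos.mpr ⟨y, this⟩
      omega
  | succ n ih =>
    intro x x' hne hcard
    by_cases hb : IsBasicEdge x x'
    · exact ⟨1, _, goodPath_single hb⟩
    · have hnb : IsNonBasicEdge x x' := by
        by_contra hc; exact hb ⟨hne, hc⟩
      obtain ⟨y, hy1, hy2, hy3⟩ : ∃ y : X, y ≠ x ∧ y ≠ x' ∧ dist x y + dist y x' = dist x x' := by
        rcases hnb with h | h
        · exact exists_mid h
        · obtain ⟨y, hy1, hy2, hy3⟩ := exists_mid h
          exact ⟨y, hy2, hy1, by rw [dist_comm x' y, dist_comm y x, dist_comm x' x] at hy3; linarith⟩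
      set B := Finset.univ.filter
          (fun z => z ≠ x ∧ z ≠ x' ∧ dist x z + dist z x' = dist x x') with hB
      have hyB : y ∈ B := by simp [hB, hy1, hy2, hy3]
      -- the "between x and y" set is contained in B.erase y
      have hsub1 : Finset.univ.filter
          (fun z => z ≠ x ∧ z ≠ y ∧ dist x z + dist z y = dist x y) ⊆ B.erase y := by
        intro z hz
        simp only [Finset.mem_filter, Finset.mem_univ, true_and] at hz
        obtain ⟨hz1, hz2, hz3⟩ := hz
        have t1 := dist_triangle x z x'
        have t2 := dist_triangle z y x'
        have hzx' : dist x z + dist z x' = dist x x' := by linarith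
        have hz4 : z ≠ x' := by
          intro h; subst h
          have : dist z z = 0 := dist_self z
          have hd : (0:ℝ) < dist z y := dist_pos.mpr hz2
          have := dist_comm y z
          linarith
        refine Finset.mem_erase.mpr ⟨hz2, ?_⟩
        simp [hB, hz1, hz4, hzx']
      have hsub2 : Finset.univ.filter
          (fun z => z ≠ y ∧ z ≠ x' ∧ dist y z + dist z x' = dist y x') ⊆ B.erase y := by
        intro z hz
        simp only [Finset.mem_filter, Finset.mem_univ, true_and] at hz
        obtain ⟨hz1, hz2, hz3⟩ := hz
        have t1 := dist_triangle x z x'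
        have t2 := dist_triangle x y z
        have hzx' : dist x z + dist z x' = dist x x' := by linarith
        have hz4 : z ≠ x := by
          intro h; subst h
          have : dist z z = 0 := dist_self z
          have hd : (0:ℝ) < dist z y := dist_pos.mpr hz1
          have t3 := dist_triangle z y x'
          have := dist_comm y z
          linarith
        refine Finset.mem_erase.mpr ⟨hz1, ?_⟩
        simp [hB, hz4, hz2, hzx']
      have hclt : (B.erase y).card ≤ n := by
        have := Finset.card_erase_lt_of_mem hyB
        omega
      obtain ⟨mP, P, hP⟩ := ih x y (Ne.symm hy1) (le_trans (Finset.card_le_card hsub1) hclt)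
      obtain ⟨mQ, Q, hQ⟩ := ih y x' hy2 (le_trans (Finset.card_le_card hsub2) hclt)
      exact ⟨mP + mQ, _, goodPath_concat hy3 hP hQ⟩

/-- Any two distinct points of a finite metric space are joined by a path of basic
edges whose total length is the distance between them; in particular the basic
geodesic graph is connected (and, since each basic edge `{a,b}` has length
`dist a b`, its shortest-path metric realises `d`). -/
theorem basicGeodesicGraph_connected_realises
    {X : Type*} [MetricSpace X] [Fintype X] [Nonempty X] :
    (∀ x x' : X, x ≠ x' →
      ∃ (m : ℕ) (p : Fin (m + 1) → X), 1 ≤ m ∧ Function.Injective p ∧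
        p 0 = x ∧ p (Fin.last m) = x' ∧
        (∀ i : Fin m, IsBasicEdge (p i.castSucc) (p i.succ)) ∧
        ∑ i : Fin m, dist (p i.castSucc) (p i.succ) = dist x x') ∧
    (basicGeodesicGraph X).Connected := by
  have main : ∀ x x' : X, x ≠ x' →
      ∃ (m : ℕ) (p : Fin (m + 1) → X), 1 ≤ m ∧ Function.Injective p ∧
        p 0 = x ∧ p (Fin.last m) = x' ∧
        (∀ i : Fin m, IsBasicEdge (p i.castSucc) (p i.succ)) ∧
        ∑ i : Fin m, dist (p i.castSucc) (p i.succ) = dist x x' := by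
    intro x x' hne
    obtain ⟨m, f, hm1, hinj, h0, hm, hb, hs, _⟩ :=
      goodPath_exists (Fintype.card X) x x' hne (Finset.card_le_univ _)
    refine ⟨m, fun i => f i.val, hm1, ?_, ?_, ?_, ?_, ?_⟩
    · intro i j hij
      exact Fin.ext (hinj i.val (by omega) j.val (by omega) hij)
    · simpa using h0
    · simpa using hm
    · intro i
      have := hb i.val i.isLt
      simpa [Fin.coe_castSucc, Fin.val_succ] using this
    · rw [← hs, ← Fin.sum_univ_eq_sum_range (fun n => dist (f n) (f (n + 1))) m]
      exact Finset.sum_congr rfl fun i _ => by simp [Fin.coe_castSucc, Fin.val_succ]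
  refine ⟨main, ?_⟩
  refine ⟨fun x x' => ?_⟩
  by_cases hne : x = x'
  · subst hne; rfl
  · obtain ⟨m, f, hm1, hinj, h0, hm, hb, hs, _⟩ :=
      goodPath_exists (Fintype.card X) x x' hne (Finset.card_le_univ _)
    have reach : ∀ k ≤ m, (basicGeodesicGraph X).Reachable (f 0) (f k) := by
      intro k
      induction k with
      | zero => intro _; rfl
      | succ k ih =>
        intro hk
        exact (ih (by omega)).trans
          (SimpleGraph.Adj.reachable (show (basicGeodesicGraph X).Adj (f k) (f (k + 1)) from
            hb k (by omega)))
    have := reach m le_rfl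
    rwa [h0, hm] at this
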